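/- The three-dimensional wedge counterexample: the function B is harmonic on Ω_α; B vanishes on the Dirichlet face D (that is, B(x, y, 0) → 0 as a point of Ω_α tends to a point (x, y, 0) with y > 0, and the real-analytic extension of B across D is 0 on D); the derivative of (the real-analytic extension of) B in the unit direction (0, −sin α, cos α) normal to the Neumann face N vanishes at every point of N; and nevertheless the gradient of B fails to be square-integrable on the Dirichlet face near the edge: ∫_{{(x,y,0) : |x|<1, 0<y<1}} ‖∇B‖² dH² = +∞. -/

import Mathlib

open MeasureTheory Filter

noncomputable section

/-- The point `(x, y, t)` of `ℝ³ = EuclideanSpace ℝ (Fin 3)`. -/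
def pt (x y t : ℝ) : EuclideanSpace ℝ (Fin 3) :=
  (WithLp.equiv 2 (Fin 3 → ℝ)).symm ![x, y, t]

/-- The open wedge `Ω_α = {(x, r cos θ, r sin θ) : x ∈ ℝ, r > 0, 0 < θ < α}`. -/
def wedge (α : ℝ) : Set (EuclideanSpace ℝ (Fin 3)) :=
  {p | ∃ x r θ : ℝ, 0 < r ∧ 0 < θ ∧ θ < α ∧
    p = pt x (r * Real.cos θ) (r * Real.sin θ)}

/-- The squared Euclidean norm of the gradient of `B : ℝ³ → ℝ`. -/
def gradNormSq (B : EuclideanSpace ℝ (Fin 3) → ℝ) (p : EuclideanSpace ℝ (Fin 3)) : ℝ :=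
  ∑ i, (fderiv ℝ B p (EuclideanSpace.single i 1)) ^ 2

/-! ### Auxiliary material -/

lemma pt_eta (p : EuclideanSpace ℝ (Fin 3)) : pt (p 0) (p 1) (p 2) = p := by
  ext i; fin_cases i <;> rfl

/-- The projection `(x,y,t) ↦ y + t i` as a continuous `ℝ`-linear map. -/
def psiL : EuclideanSpace ℝ (Fin 3) →L[ℝ] ℂ :=
  ((EuclideanSpace.proj (1 : Fin 3)).smulRight (1:ℂ)) +
    ((EuclideanSpace.proj (2 : Fin 3)).smulRight Complex.I)

lemma psiL_apply (p : EuclideanSpace ℝ (Fin 3)) :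
    psiL p = (p 1 : ℂ) + (p 2 : ℝ) * Complex.I := by
  simp [psiL, Complex.real_smul]

lemma psiL_pt (x y t : ℝ) : psiL (pt x y t) = (y:ℂ) + (t:ℝ) * Complex.I := by
  rw [psiL_apply]; rfl

lemma arg_polar {r φ : ℝ} (hr : 0 < r) (h1 : -Real.pi < φ) (h2 : φ ≤ Real.pi) :
    ((r:ℂ) * Complex.exp (φ * Complex.I)).arg = φ := by
  rw [Complex.exp_mul_I, Complex.arg_real_mul _ hr]
  exact_mod_cast Complex.arg_cos_add_sin_mul_I ⟨h1, h2⟩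

lemma cpow_polar {r φ : ℝ} (hr : 0 < r) (h1 : -Real.pi < φ) (h2 : φ ≤ Real.pi) (s : ℂ) :
    ((r:ℂ) * Complex.exp (φ * Complex.I)) ^ s
      = Complex.exp (s * ((Real.log r : ℂ) + (φ:ℝ) * Complex.I)) := by
  have hz : ((r:ℂ) * Complex.exp (φ * Complex.I)) ≠ 0 :=
    mul_ne_zero (by exact_mod_cast hr.ne') (Complex.exp_ne_zero _)
  rw [Complex.cpow_def_of_ne_zero hz]
  congr 1
  rw [Complex.log, arg_polar hr h1 h2]
  have : ‖((r:ℂ) * Complex.exp (↑φ * Complex.I))‖ = r := by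
    simp [Complex.norm_exp, abs_of_pos hr]
  rw [this, mul_comm]

lemma exp_polar_im (a b : ℝ) : (Complex.exp ((a:ℂ) + (b:ℝ) * Complex.I)).im
    = Real.exp a * Real.sin b := by
  rw [Complex.exp_im]; simp

lemma exp_polar_re (a b : ℝ) : (Complex.exp ((a:ℂ) + (b:ℝ) * Complex.I)).re
    = Real.exp a * Real.cos b := by
  rw [Complex.exp_re]; simp

/-- Packaging of the relevant derivative as a continuous linear map. -/
def DD (d : ℂ) : EuclideanSpace ℝ (Fin 3) →L[ℝ] ℝ :=
  Complex.imCLM.comp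
    (((ContinuousLinearMap.smulRight (1 : ℂ →L[ℂ] ℂ) d).restrictScalars ℝ).comp psiL)

lemma DD_apply (d : ℂ) (v : EuclideanSpace ℝ (Fin 3)) : DD d v = (psiL v * d).im := by
  simp [DD, ContinuousLinearMap.smulRight_apply, smul_eq_mul]

lemma hasFDerivAt_im_comp {H : ℂ → ℂ} {d : ℂ} {p : EuclideanSpace ℝ (Fin 3)}
    (h : HasDerivAt H d (psiL p)) :
    HasFDerivAt (fun q => (H (psiL q)).im) (DD d) p :=
  Complex.imCLM.hasFDerivAt.comp p
    ((h.hasFDerivAt.restrictScalars ℝ).comp p psiL.hasFDerivAt)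

lemma psiL_single_zero : psiL (EuclideanSpace.single (0 : Fin 3) (1:ℝ)) = 0 := by
  simp [psiL_apply, EuclideanSpace.single_apply]

lemma psiL_single_one : psiL (EuclideanSpace.single (1 : Fin 3) (1:ℝ)) = 1 := by
  simp [psiL_apply, EuclideanSpace.single_apply]

lemma psiL_single_two : psiL (EuclideanSpace.single (2 : Fin 3) (1:ℝ)) = Complex.I := by
  simp [psiL_apply, EuclideanSpace.single_apply]

/-- The embedding of the plane `t = 0`. -/
def LL (q : ℝ × ℝ) : EuclideanSpace ℝ (Fin 3) := pt q.1 q.2 0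

lemma LL_antilip : AntilipschitzWith 1 LL := by
  rw [antilipschitzWith_iff_le_mul_dist]
  intro q q'
  rw [Prod.dist_eq, EuclideanSpace.dist_eq]
  have h1 : ∀ i : Fin 3, dist (LL q i) (LL q' i) ^ 2
      ≤ ∑ j, dist (LL q j) (LL q' j) ^ 2 := fun i =>
    Finset.single_le_sum (f := fun j => dist (LL q j) (LL q' j) ^ 2)
      (fun j _ => sq_nonneg _) (Finset.mem_univ i)
  have key : ∀ i : Fin 3, dist (LL q i) (LL q' i)
      ≤ Real.sqrt (∑ j, dist (LL q j) (LL q' j) ^ 2) := by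
    intro i
    calc dist (LL q i) (LL q' i) = Real.sqrt (dist (LL q i) (LL q' i) ^ 2) := by
          rw [Real.sqrt_sq dist_nonneg]
      _ ≤ _ := Real.sqrt_le_sqrt (h1 i)
  rw [NNReal.coe_one, one_mul]
  apply max_le
  · exact key 0
  · exact key 1

lemma LL_lip : LipschitzWith 2 LL := by
  rw [lipschitzWith_iff_dist_le_mul]
  intro q q'
  rw [Prod.dist_eq, EuclideanSpace.dist_eq]
  have h0 : dist (LL q 0) (LL q' 0) = dist q.1 q'.1 := rfl
  have h1 : dist (LL q 1) (LL q' 1) = dist q.2 q'.2 := rfl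
  have h2 : dist (LL q 2) (LL q' 2) = 0 := by simp [LL, pt, dist_self]
  rw [Fin.sum_univ_three, h0, h1, h2]
  have hm : (0:ℝ) ≤ max (dist q.1 q'.1) (dist q.2 q'.2) :=
    le_max_of_le_left dist_nonneg
  calc Real.sqrt (dist q.1 q'.1 ^ 2 + dist q.2 q'.2 ^ 2 + 0 ^ 2)
      ≤ Real.sqrt ((2 * max (dist q.1 q'.1) (dist q.2 q'.2)) ^ 2) := by
        apply Real.sqrt_le_sqrt
        have a1 : dist q.1 q'.1 ≤ max (dist q.1 q'.1) (dist q.2 q'.2) := le_max_left _ _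
        have a2 : dist q.2 q'.2 ≤ max (dist q.1 q'.1) (dist q.2 q'.2) := le_max_right _ _
        have b1 : dist q.1 q'.1 ^ 2 ≤ (max (dist q.1 q'.1) (dist q.2 q'.2)) ^ 2 :=
          pow_le_pow_left₀ dist_nonneg a1 2
        have b2 : dist q.2 q'.2 ^ 2 ≤ (max (dist q.1 q'.1) (dist q.2 q'.2)) ^ 2 :=
          pow_le_pow_left₀ dist_nonneg a2 2
        nlinarith [hm]
      _ = 2 * max (dist q.1 q'.1) (dist q.2 q'.2) := by
        rw [Real.sqrt_sq (by positivity)]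
  -- coercion

/-- the three-dimensional wedge counterexample.  With
`π ≤ α < 2π`, `β = π/(2α)` and `B(x, r cos θ, r sin θ) = r^β sin(βθ)`
(hypothesized on the slightly larger wedge `−δ < θ < α + δ`):
`B` is harmonic on `Ω_α`; `B` vanishes on the Dirichlet face `D` (both as a
nontangential/full limit from `Ω_α` and as the value of the real-analytic
extension); the derivative of (the extension of) `B` in the unit direction
`(0, −sin α, cos α)` normal to the Neumann face `N` vanishes on `N`; and yet
`∫_{{(x,y,0) : |x|<1, 0<y<1}} ‖∇B‖² dH² = +∞`. -/
theorem wedge_counterexample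
    (α : ℝ) (hα₁ : Real.pi ≤ α) (hα₂ : α < 2 * Real.pi)
    (β : ℝ) (hβ : β = Real.pi / (2 * α))
    (δ : ℝ) (hδ : 0 < δ) (hαδ : α + 2 * δ < 2 * Real.pi)
    (B : EuclideanSpace ℝ (Fin 3) → ℝ)
    (hB : ∀ x r θ : ℝ, 0 < r → -δ < θ → θ < α + δ →
      B (pt x (r * Real.cos θ) (r * Real.sin θ)) = r ^ β * Real.sin (β * θ)) :
    (ContDiffOn ℝ 2 B (wedge α) ∧
      ∀ p ∈ wedge α,
        ∑ i, fderiv ℝ (fun q => fderiv ℝ B q (EuclideanSpace.single i 1)) p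
          (EuclideanSpace.single i 1) = 0) ∧
    (∀ x y : ℝ, 0 < y →
      Tendsto B (nhdsWithin (pt x y 0) (wedge α)) (nhds 0)) ∧
    (∀ x y : ℝ, 0 < y → B (pt x y 0) = 0) ∧
    (∀ x r : ℝ, 0 < r →
      fderiv ℝ B (pt x (r * Real.cos α) (r * Real.sin α))
        (pt 0 (-Real.sin α) (Real.cos α)) = 0) ∧
    ∫⁻ p in {p : EuclideanSpace ℝ (Fin 3) |
        ∃ x y : ℝ, |x| < 1 ∧ 0 < y ∧ y < 1 ∧ p = pt x y 0},
      ENNReal.ofReal (gradNormSq B p) ∂μH[2] = ⊤ := by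
  have hπ := Real.pi_pos
  have hα0 : 0 < α := lt_of_lt_of_le hπ hα₁
  have hβ0 : 0 < β := by rw [hβ]; positivity
  have hβhalf : β ≤ 1 / 2 := by
    rw [hβ, div_le_div_iff₀ (by linarith) (by norm_num)]; linarith
  have hβα : β * α = Real.pi / 2 := by
    rw [hβ]; field_simp
  set c : ℝ := α / 2 with hc
  have hc0 : 0 < c := by simp only [hc]; linarith
  have hcπ : c < Real.pi := by simp only [hc]; linarith
  have hγπ : c + δ < Real.pi := by simp only [hc]; linarith
  set s : ℂ := (β : ℂ) with hs
  set e : ℂ := Complex.exp ((-c : ℝ) * Complex.I) with he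
  set A : ℂ := Complex.exp (((β * c : ℝ)) * Complex.I) with hA
  set H : ℂ → ℂ := fun z => A * (e * z) ^ s with hH
  set dH : ℂ → ℂ := fun z => (A * s * e) * (e * z) ^ (s - 1) with hdH
  set ddH : ℂ → ℂ := fun z => ((A * s * e) * ((s - 1) * e)) * (e * z) ^ (s - 1 - 1) with hddH
  -- multiplication by `e` in polar coordinates
  have hmul : ∀ r θ : ℝ, e * ((r:ℂ) * Complex.exp ((θ:ℝ) * Complex.I))
      = (r:ℂ) * Complex.exp (((θ - c : ℝ)) * Complex.I) := by
    intro r θ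
    calc e * ((r:ℂ) * Complex.exp ((θ:ℝ) * Complex.I))
        = (r:ℂ) * (Complex.exp ((-c : ℝ) * Complex.I) * Complex.exp ((θ:ℝ) * Complex.I)) := by
          rw [he]; ring
      _ = (r:ℂ) * Complex.exp (((θ - c : ℝ)) * Complex.I) := by
          rw [← Complex.exp_add]; congr 1; push_cast; ring
  -- polar description of the relevant points
  have hpsi : ∀ x r θ : ℝ, psiL (pt x (r * Real.cos θ) (r * Real.sin θ))
      = (r:ℂ) * Complex.exp ((θ:ℝ) * Complex.I) := by
    intro x r θ
    rw [psiL_pt, Complex.exp_mul_I]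
    push_cast
    ring
  -- the enlarged open wedge
  set Ω : Set (EuclideanSpace ℝ (Fin 3)) :=
    {p | e * psiL p ≠ 0 ∧ |(e * psiL p).arg| < c + δ} with hΩ
  have hmemΩ : ∀ x r θ : ℝ, 0 < r → -δ < θ → θ < α + δ →
      pt x (r * Real.cos θ) (r * Real.sin θ) ∈ Ω := by
    intro x r θ hr h1 h2
    have h3 : e * psiL (pt x (r * Real.cos θ) (r * Real.sin θ))
        = (r:ℂ) * Complex.exp (((θ - c : ℝ)) * Complex.I) := by
      rw [hpsi]; exact hmul r θ
    constructor
    · rw [h3]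
      exact mul_ne_zero (by exact_mod_cast hr.ne') (Complex.exp_ne_zero _)
    · rw [h3, arg_polar hr (by simp only [hc] at *; linarith) (by simp only [hc] at *; linarith)]
      rw [abs_lt]
      constructor <;> [skip; skip] <;> simp only [hc] at * <;> linarith
  have hslit : ∀ p ∈ Ω, e * psiL p ∈ Complex.slitPlane := by
    intro p hp
    refine Complex.mem_slitPlane_iff_arg.mpr ⟨?_, hp.1⟩
    intro h
    have := hp.2
    rw [h, abs_of_pos hπ] at this
    linarith
  have hopen : IsOpen Ω := by
    rw [isOpen_iff_mem_nhds]
    intro p hp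
    have hcont : ContinuousAt (fun q => e * psiL q) p :=
      (continuous_const.mul psiL.continuous).continuousAt
    have h1 : ∀ᶠ q in nhds p, e * psiL q ≠ 0 := hcont.eventually_ne hp.1
    have harg : ∀ᶠ w in nhds (e * psiL p), |Complex.arg w| < c + δ :=
      (continuous_abs.continuousAt.comp (Complex.continuousAt_arg (hslit p hp)))
        (Iio_mem_nhds hp.2)
    have h2 : ∀ᶠ q in nhds p, |(e * psiL q).arg| < c + δ := hcont.eventually harg
    filter_upwards [h1, h2] with q hq1 hq2
    exact ⟨hq1, hq2⟩
  -- values of H and dH in polar coordinates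
  have hpow : ∀ (r θ : ℝ) (t : ℂ), 0 < r → |θ - c| < Real.pi →
      (e * ((r:ℂ) * Complex.exp ((θ:ℝ) * Complex.I))) ^ t
        = Complex.exp (t * ((Real.log r : ℂ) + ((θ - c : ℝ)) * Complex.I)) := by
    intro r θ t hr habs
    obtain ⟨hl, hu⟩ := abs_lt.1 habs
    rw [hmul]
    exact cpow_polar hr hl hu.le t
  have hHval : ∀ r θ : ℝ, 0 < r → |θ - c| < Real.pi →
      H ((r:ℂ) * Complex.exp ((θ:ℝ) * Complex.I))
        = Complex.exp (((β * Real.log r : ℝ) : ℂ) + ((β * θ : ℝ)) * Complex.I) := by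
    intro r θ hr habs
    simp only [hH]
    rw [hpow r θ s hr habs, hA]
    rw [← Complex.exp_add]
    congr 1
    simp only [hs]
    push_cast
    ring
  have hdHval : ∀ r θ : ℝ, 0 < r → |θ - c| < Real.pi →
      dH ((r:ℂ) * Complex.exp ((θ:ℝ) * Complex.I))
        = (β:ℂ) * Complex.exp ((((β - 1) * Real.log r : ℝ) : ℂ)
            + (((β - 1) * θ : ℝ)) * Complex.I) := by
    intro r θ hr habs
    simp only [hdH]
    rw [hpow r θ (s - 1) hr habs, hA, he]
    calc Complex.exp (((β * c : ℝ)) * Complex.I) * s * Complex.exp ((-c : ℝ) * Complex.I)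
          * Complex.exp ((s - 1) * ((Real.log r : ℂ) + ((θ - c : ℝ)) * Complex.I))
        = (β:ℂ) * Complex.exp ((((β * c : ℝ)) * Complex.I) + (((-c : ℝ)) * Complex.I
            + (s - 1) * ((Real.log r : ℂ) + ((θ - c : ℝ)) * Complex.I))) := by
          rw [Complex.exp_add, Complex.exp_add, hs]; ring
      _ = _ := by
          congr 1
          simp only [hs]
          push_cast
          ring
  -- imaginary part of H in polar coordinates
  have hHim : ∀ r θ : ℝ, 0 < r → |θ - c| < Real.pi →
      (H ((r:ℂ) * Complex.exp ((θ:ℝ) * Complex.I))).im = r ^ β * Real.sin (β * θ) := by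
    intro r θ hr habs
    rw [hHval r θ hr habs, exp_polar_im]
    congr 1
    rw [Real.rpow_def_of_pos hr, mul_comm]
  -- B agrees with the explicit harmonic function on Ω
  have hBF : ∀ p ∈ Ω, B p = (H (psiL p)).im := by
    intro p hp
    obtain ⟨h0, hargp⟩ := hp
    set w := e * psiL p with hw
    set r := ‖w‖ with hr
    set θ := w.arg + c with hθ
    have hr0 : 0 < r := norm_pos_iff.mpr h0
    have hargw := abs_lt.1 hargp
    have hexp1 : Complex.exp ((c : ℝ) * Complex.I) * e = 1 := by
      rw [he, ← Complex.exp_add,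
        show ((c:ℝ) * Complex.I + ((-c : ℝ)) * Complex.I : ℂ) = 0 by push_cast; ring,
        Complex.exp_zero]
    have hpsip : psiL p = (r:ℂ) * Complex.exp ((θ:ℝ) * Complex.I) := by
      have h1 : psiL p = Complex.exp ((c : ℝ) * Complex.I) * w := by
        rw [hw, ← mul_assoc, hexp1, one_mul]
      rw [h1, ← Complex.norm_mul_exp_arg_mul_I w, ← hr]
      rw [show ((w.arg : ℝ) : ℂ) = (w.arg : ℂ) from rfl]
      calc Complex.exp ((c : ℝ) * Complex.I) * ((r:ℂ) * Complex.exp (w.arg * Complex.I))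
          = (r:ℂ) * (Complex.exp ((c : ℝ) * Complex.I) * Complex.exp (w.arg * Complex.I)) := by
            ring
        _ = (r:ℂ) * Complex.exp ((θ:ℝ) * Complex.I) := by
            rw [← Complex.exp_add]; congr 1; push_cast [hθ]; ring
    have hco : p 1 = r * Real.cos θ ∧ p 2 = r * Real.sin θ := by
      have h2 := hpsip
      rw [psiL_apply, Complex.exp_mul_I, Complex.ext_iff] at h2
      obtain ⟨h2a, h2b⟩ := h2
      constructor
      · simpa [Complex.cos_ofReal_re] using h2a
      · simpa [Complex.sin_ofReal_re] using h2b
    have hp' : p = pt (p 0) (r * Real.cos θ) (r * Real.sin θ) := by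
      conv_lhs => rw [← pt_eta p]
      rw [hco.1, hco.2]
    have hθ1 : -δ < θ := by simp only [hθ]; linarith [hargw.1]
    have hθ2 : θ < α + δ := by
      have : w.arg < c + δ := hargw.2
      simp only [hθ, hc] at *; linarith
    rw [hp', hB (p 0) r θ hr0 hθ1 hθ2, ← hp', hpsip,
      hHim r θ hr0 (by rw [show θ - c = w.arg by simp [hθ]]; exact lt_trans hargp hγπ)]
  -- derivative facts
  have hH' : ∀ z : ℂ, e * z ∈ Complex.slitPlane → HasDerivAt H (dH z) z := by
    intro z hz
    have h := (((hasDerivAt_id z).const_mul e).cpow_const (c := s) hz).const_mul A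
    refine h.congr_deriv ?_
    simp only [hdH, id_eq]; ring
  have hdH' : ∀ z : ℂ, e * z ∈ Complex.slitPlane → HasDerivAt dH (ddH z) z := by
    intro z hz
    have h := (((hasDerivAt_id z).const_mul e).cpow_const (c := s - 1) hz).const_mul (A * s * e)
    refine h.congr_deriv ?_
    simp only [hddH, id_eq]; ring
  have hBFev : ∀ p ∈ Ω, B =ᶠ[nhds p] (fun q => (H (psiL q)).im) := by
    intro p hp
    filter_upwards [hopen.mem_nhds hp] with q hq
    exact hBF q hq
  have hBd : ∀ p ∈ Ω, HasFDerivAt B (DD (dH (psiL p))) p := fun p hp =>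
    (hasFDerivAt_im_comp (hH' _ (hslit p hp))).congr_of_eventuallyEq (hBFev p hp)
  have hfderivB : ∀ p ∈ Ω, fderiv ℝ B p = DD (dH (psiL p)) := fun p hp => (hBd p hp).fderiv
  have hwedge : wedge α ⊆ Ω := by
    rintro p ⟨x, r, θ, hr, h1, h2, rfl⟩
    exact hmemΩ x r θ hr (by linarith) (by linarith)
  refine ⟨⟨?_, ?_⟩, ?_, ?_, ?_, ?_⟩
  · -- ContDiffOn
    have hVopen : IsOpen {z : ℂ | e * z ∈ Complex.slitPlane} :=
      Complex.isOpen_slitPlane.preimage (continuous_const.mul continuous_id)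
    have hHdiff : DifferentiableOn ℂ H {z : ℂ | e * z ∈ Complex.slitPlane} := fun z hz =>
      (hH' z hz).differentiableAt.differentiableWithinAt
    have hHcd : ContDiffOn ℂ 2 H {z : ℂ | e * z ∈ Complex.slitPlane} :=
      (hHdiff.analyticOnNhd hVopen).contDiffOn hVopen.uniqueDiffOn
    have hFcd : ContDiffOn ℝ 2 (fun q => (H (psiL q)).im) Ω := by
      have h1 : ContDiffOn ℝ 2 (H ∘ psiL) Ω :=
        ContDiffOn.comp (hHcd.restrict_scalars ℝ) psiL.contDiff.contDiffOn
          (fun p hp => hslit p hp)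
      have h2 := (Complex.imCLM.contDiff (n := 2)).comp_contDiffOn h1
      exact h2
    exact (hFcd.mono hwedge).congr (fun p hp => hBF p (hwedge hp))
  · -- harmonic
    intro p hp
    have hpΩ := hwedge hp
    set z := psiL p with hz
    have hev : ∀ i : Fin 3, (fun q => fderiv ℝ B q (EuclideanSpace.single i 1))
        =ᶠ[nhds p] (fun q =>
          ((fun w => psiL (EuclideanSpace.single i (1:ℝ)) * dH w) (psiL q)).im) := by
      intro i
      filter_upwards [hopen.mem_nhds hpΩ] with q hq
      rw [hfderivB q hq, DD_apply]
    have hG : ∀ i : Fin 3, HasFDerivAt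
        (fun q => ((fun w => psiL (EuclideanSpace.single i (1:ℝ)) * dH w) (psiL q)).im)
        (DD (psiL (EuclideanSpace.single i (1:ℝ)) * ddH z)) p := fun i =>
      hasFDerivAt_im_comp ((hdH' z (hslit p hpΩ)).const_mul
        (psiL (EuclideanSpace.single i (1:ℝ))))
    have hfi : ∀ i : Fin 3, fderiv ℝ (fun q => fderiv ℝ B q (EuclideanSpace.single i 1)) p
        (EuclideanSpace.single i 1)
        = (psiL (EuclideanSpace.single i (1:ℝ))
            * (psiL (EuclideanSpace.single i (1:ℝ)) * ddH z)).im := by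
      intro i
      rw [(hev i).fderiv_eq, (hG i).fderiv, DD_apply]
    rw [Fin.sum_univ_three, hfi 0, hfi 1, hfi 2, psiL_single_zero, psiL_single_one,
      psiL_single_two]
    have hII : Complex.I * (Complex.I * ddH z) = -(1 * (1 * ddH z)) := by
      rw [← mul_assoc, Complex.I_mul_I]; ring
    rw [hII]
    simp
  · -- tendsto
    intro x y hy
    have hface : pt x (y * Real.cos 0) (y * Real.sin 0) = pt x y 0 := by
      simp
    have hpΩ : pt x y 0 ∈ Ω := by
      rw [← hface]; exact hmemΩ x y 0 hy (by linarith) (by linarith)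
    have hcF : ContinuousAt (fun q => (H (psiL q)).im) (pt x y 0) :=
      (hasFDerivAt_im_comp (hH' _ (hslit _ hpΩ))).continuousAt
    have hcB : ContinuousAt B (pt x y 0) :=
      hcF.congr (hBFev _ hpΩ).symm
    have hB0 : B (pt x y 0) = 0 := by
      have h := hB x y 0 hy (by linarith) (by linarith)
      simpa using h
    have := hcB.continuousWithinAt (s := wedge α)
    rw [ContinuousWithinAt, hB0] at this
    exact this
  · -- face value
    intro x y hy
    have h := hB x y 0 hy (by linarith) (by linarith)
    simpa using h
  · -- Neumann
    intro x r hr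
    have hpΩ : pt x (r * Real.cos α) (r * Real.sin α) ∈ Ω :=
      hmemΩ x r α hr (by linarith) (by linarith)
    rw [hfderivB _ hpΩ, DD_apply, hpsi x r α,
      hdHval r α hr (by
        rw [show α - c = c by simp only [hc]; ring, abs_of_pos hc0]; exact hcπ)]
    rw [show pt 0 (-Real.sin α) (Real.cos α) = pt 0 ((1:ℝ) * Real.cos (α + Real.pi/2))
        ((1:ℝ) * Real.sin (α + Real.pi/2)) by
      rw [Real.cos_add_pi_div_two, Real.sin_add_pi_div_two]; ring_nf]
    rw [hpsi 0 1 (α + Real.pi/2)]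
    have hcomb : (((1:ℝ)):ℂ) * Complex.exp (((α + Real.pi/2 : ℝ)) * Complex.I) *
        ((β:ℂ) * Complex.exp ((((β - 1) * Real.log r : ℝ) : ℂ)
          + (((β - 1) * α : ℝ)) * Complex.I))
        = (β:ℂ) * Complex.exp ((((β - 1) * Real.log r : ℝ) : ℂ)
            + ((Real.pi : ℝ)) * Complex.I) := by
      rw [Complex.ofReal_one, one_mul, mul_comm, mul_assoc, ← Complex.exp_add]
      congr 1
      have hang : Real.pi = (β - 1) * α + (α + Real.pi/2) := by linear_combination -hβα
      conv_rhs => rw [hang]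
      push_cast
      ring
    rw [hcomb, Complex.mul_im, exp_polar_im, exp_polar_re]
    simp [Real.sin_pi]
  · -- integral
    have hface : ∀ x y : ℝ, 0 < y → gradNormSq B (pt x y 0) = (β * y ^ (β - 1)) ^ 2 := by
      intro x y hy
      have hmem : pt x y 0 ∈ Ω := by
        have h := hmemΩ x y 0 hy (by linarith) (by linarith)
        simpa using h
      have hdHy : dH ((y:ℝ):ℂ) = ((β * y ^ (β - 1) : ℝ) : ℂ) := by
        have h0 : (((y:ℝ)):ℂ) = ((y:ℝ):ℂ) * Complex.exp (((0:ℝ)) * Complex.I) := by simp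
        rw [h0, hdHval y 0 hy (by rw [zero_sub, abs_neg, abs_of_pos hc0]; exact hcπ)]
        rw [show ((β - 1) * (0:ℝ)) = 0 by ring]
        simp only [Complex.ofReal_zero, zero_mul, add_zero]
        rw [← Complex.ofReal_exp, ← Complex.ofReal_mul]
        norm_cast
        rw [Real.rpow_def_of_pos hy]
        ring
      have hz0 : psiL (pt x y 0) = ((y:ℝ):ℂ) := by
        rw [psiL_pt]; simp
      simp only [gradNormSq]
      rw [Fin.sum_univ_three, hfderivB _ hmem, hz0, hdHy, DD_apply, DD_apply, DD_apply,
        psiL_single_zero, psiL_single_one, psiL_single_two]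
      simp [Complex.mul_im]
    set T : Set (ℝ × ℝ) := Set.Ioo (-1:ℝ) 1 ×ˢ Set.Ioo (0:ℝ) 1 with hT
    have hLmeas : Measurable LL := LL_lip.continuous.measurable
    have hLemb : MeasurableEmbedding LL :=
      (LL_antilip.isClosedEmbedding LL_lip.uniformContinuous).measurableEmbedding
    set S : Set (EuclideanSpace ℝ (Fin 3)) :=
      {p | ∃ x y : ℝ, |x| < 1 ∧ 0 < y ∧ y < 1 ∧ p = pt x y 0} with hS
    have himg : LL '' T = S := by
      ext p
      constructor
      · rintro ⟨⟨x, y⟩, ⟨hx, hy⟩, rfl⟩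
        exact ⟨x, y, abs_lt.2 ⟨hx.1, hx.2⟩, hy.1, hy.2, rfl⟩
      · rintro ⟨x, y, hx, hy0, hy1, rfl⟩
        exact ⟨(x, y), ⟨⟨(abs_lt.1 hx).1, (abs_lt.1 hx).2⟩, hy0, hy1⟩, rfl⟩
    have hmap_le : Measure.map LL (volume.restrict T) ≤ μH[2].restrict S := by
      refine Measure.le_iff.2 (fun A hA => ?_)
      rw [Measure.map_apply hLmeas hA, Measure.restrict_apply (hLmeas hA),
        Measure.restrict_apply hA]
      have h1 : volume (LL ⁻¹' A ∩ T) = μH[2] (LL ⁻¹' A ∩ T) := by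
        rw [hausdorffMeasure_prod_real]
      rw [h1]
      have h2 := LL_antilip.le_hausdorffMeasure_image
        (show (0:ℝ) ≤ 2 by norm_num) (LL ⁻¹' A ∩ T)
      have h3 : μH[2] (LL '' (LL ⁻¹' A ∩ T)) ≤ μH[2] (A ∩ S) := by
        apply measure_mono
        rintro _ ⟨q, ⟨hqA, hqT⟩, rfl⟩
        exact ⟨hqA, himg ▸ Set.mem_image_of_mem LL hqT⟩
      refine le_trans (le_trans h2 ?_) h3
      simp
    have hinner : ∫⁻ y in Set.Ioo (0:ℝ) 1,
        ENNReal.ofReal (β^2 * y ^ ((β-1)*2)) ∂volume = ⊤ := by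
      by_contra hne
      have hfin : ∫⁻ y in Set.Ioo (0:ℝ) 1,
          ENNReal.ofReal (β^2 * y ^ ((β-1)*2)) ∂volume < ⊤ := lt_top_iff_ne_top.2 hne
      have hnonneg : 0 ≤ᵐ[volume.restrict (Set.Ioo (0:ℝ) 1)]
          (fun y : ℝ => β^2 * y ^ ((β-1)*2)) := by
        filter_upwards [ae_restrict_mem measurableSet_Ioo] with y hy
        exact mul_nonneg (sq_nonneg β) (Real.rpow_nonneg hy.1.le _)
      have hsm : AEStronglyMeasurable (fun y : ℝ => β^2 * y ^ ((β-1)*2))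
          (volume.restrict (Set.Ioo (0:ℝ) 1)) := by
        apply ContinuousOn.aestronglyMeasurable _ measurableSet_Ioo
        exact continuousOn_const.mul
          (continuousOn_id.rpow_const (fun z hz => Or.inl hz.1.ne'))
      have hint : IntegrableOn (fun y : ℝ => β^2 * y ^ ((β-1)*2)) (Set.Ioo (0:ℝ) 1) := by
        refine ⟨hsm, ?_⟩
        rw [hasFiniteIntegral_iff_ofReal hnonneg]
        exact hfin
      have hβ2 : (β:ℝ)^2 ≠ 0 := by positivity
      have hint2 : IntegrableOn (fun y : ℝ => y ^ ((β-1)*2)) (Set.Ioo (0:ℝ) 1) := by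
        have h2 := hint.const_mul ((β^2)⁻¹)
        have h3 : Integrable (fun x : ℝ => x ^ ((β - 1) * 2)) (volume.restrict (Set.Ioo 0 1)) := by
          simpa [← mul_assoc, inv_mul_cancel₀ hβ2] using h2
        exact h3
      rw [intervalIntegral.integrableOn_Ioo_rpow_iff zero_lt_one] at hint2
      linarith
    have hmeasf : Measurable (fun q : ℝ × ℝ => ENNReal.ofReal (β^2 * q.2 ^ ((β-1)*2))) :=
      (measurable_const.mul (measurable_snd.pow measurable_const)).ennreal_ofReal
    have hTint : ∫⁻ q in T, ENNReal.ofReal (gradNormSq B (LL q)) ∂volume = ⊤ := by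
      have hcong : ∫⁻ q in T, ENNReal.ofReal (gradNormSq B (LL q)) ∂volume
          = ∫⁻ q in T, ENNReal.ofReal (β^2 * q.2 ^ ((β-1)*2)) ∂volume := by
        apply setLIntegral_congr_fun (measurableSet_Ioo.prod measurableSet_Ioo)
        rintro ⟨x, y⟩ ⟨hx, hy⟩
        beta_reduce
        rw [show gradNormSq B (LL (x, y)) = (β * y ^ (β - 1)) ^ 2 from hface x y hy.1]
        congr 1
        rw [mul_pow, ← Real.rpow_natCast (y ^ (β-1)) 2, ← Real.rpow_mul hy.1.le]
        norm_num
      rw [hcong, hT, Measure.volume_eq_prod, ← Measure.prod_restrict,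
        lintegral_prod _ hmeasf.aemeasurable]
      have hall : ∀ x : ℝ, (∫⁻ y, (fun q : ℝ × ℝ => ENNReal.ofReal (β^2 * q.2 ^ ((β-1)*2)))
          (x, y) ∂(volume.restrict (Set.Ioo (0:ℝ) 1))) = ⊤ := fun x => hinner
      rw [lintegral_congr hall, lintegral_const, Measure.restrict_apply_univ, Real.volume_Ioo]
      rw [ENNReal.top_mul]
      rw [show (1:ℝ) - (-1) = 2 by norm_num]
      simp
    refine eq_top_iff.2 ?_
    calc (⊤:ENNReal) = ∫⁻ q in T, ENNReal.ofReal (gradNormSq B (LL q)) ∂volume := hTint.symm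
      _ = ∫⁻ p, ENNReal.ofReal (gradNormSq B p) ∂(Measure.map LL (volume.restrict T)) :=
          (hLemb.lintegral_map (fun p => ENNReal.ofReal (gradNormSq B p))).symm
      _ ≤ ∫⁻ p in S, ENNReal.ofReal (gradNormSq B p) ∂μH[2] := lintegral_mono' hmap_le le_rfl
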